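/- Let n ≥ 2, ρ ∈ (−1/(n−1), 1), let C be the n×n equicorrelation matrix with C_{ii} = 1 and C_{ij} = ρ for i ≠ j, and let L be the unique lower triangular matrix with positive diagonal entries satisfying L Lᵀ = C. Then for each k ∈ {1,…,n}, L_{kk} = √(1 − (k−1)ρ² / (1 + (k−2)ρ)), and consequently (1/n)·tr(L) = (1/n)·Σ_{k=1}^n √(1 − (k−1)ρ² / (1 + (k−2)ρ)). -/

import Mathlib

open Finset

namespace Stmt16Aux

noncomputable def s (ρ : ℝ) (j : ℕ) : ℝ := (j : ℝ) * ρ ^ 2 / (1 + ((j : ℝ) - 1) * ρ)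

lemma dden_pos {n : ℕ} (hn : 2 ≤ n) {ρ : ℝ}
    (hρ1 : -(1 / ((n : ℝ) - 1)) < ρ) (hρ2 : ρ < 1) {j : ℕ} (hj : j < n) :
    0 < 1 + ((j : ℝ) - 1) * ρ := by
  have hn1 : (1:ℝ) ≤ (n:ℝ) - 1 := by
    have : (2:ℝ) ≤ n := by exact_mod_cast hn
    linarith
  have hnpos : (0:ℝ) < (n:ℝ) - 1 := by linarith
  have h1 : -1 < ρ * ((n:ℝ) - 1) := by
    have := (div_lt_iff₀ hnpos).mp (by rw [← neg_div] at hρ1; exact hρ1)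
    linarith
  have hjlo : (-1:ℝ) ≤ (j:ℝ) - 1 := by
    have : (0:ℝ) ≤ j := Nat.cast_nonneg j
    linarith
  have hjhi : (j:ℝ) - 1 ≤ (n:ℝ) - 2 := by
    have : (j:ℝ) ≤ (n:ℝ) - 1 := by
      have : (j:ℝ) + 1 ≤ n := by exact_mod_cast hj
      linarith
    linarith
  rcases le_or_gt 0 ρ with h | h
  · nlinarith
  · nlinarith

lemma one_sub_s_pos {ρ : ℝ} (hρ2 : ρ < 1) {j : ℕ}
    (hdj : 0 < 1 + ((j : ℝ) - 1) * ρ) (hdj1 : 0 < 1 + (j : ℝ) * ρ) :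
    0 < 1 - s ρ j := by
  rw [s, sub_pos, div_lt_one hdj]
  nlinarith [mul_pos (sub_pos.mpr hρ2) hdj1]

lemma s_rec {ρ : ℝ} (hρ2 : ρ < 1) {j : ℕ}
    (hdj : 0 < 1 + ((j : ℝ) - 1) * ρ) (hdj1 : 0 < 1 + (j : ℝ) * ρ) :
    s ρ (j + 1) = s ρ j + (ρ - s ρ j) ^ 2 / (1 - s ρ j) := by
  have hd : (1 + ((j : ℝ) - 1) * ρ) ≠ 0 := ne_of_gt hdj
  have he : (1 + (j : ℝ) * ρ) ≠ 0 := ne_of_gt hdj1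
  have hr : (1 - ρ) ≠ 0 := by linarith
  have hsub : 1 - s ρ j = (1 - ρ) * (1 + (j : ℝ) * ρ) / (1 + ((j : ℝ) - 1) * ρ) := by
    rw [s, eq_div_iff hd, sub_mul, div_mul_cancel₀ _ hd]; ring
  have hsub2 : ρ - s ρ j = ρ * (1 - ρ) / (1 + ((j : ℝ) - 1) * ρ) := by
    rw [s, eq_div_iff hd, sub_mul, div_mul_cancel₀ _ hd]; ring
  rw [hsub, hsub2, s, s]
  push_cast
  rw [show (1:ℝ) + ((j:ℝ) + 1 - 1) * ρ = 1 + (j:ℝ) * ρ by ring]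
  rw [div_pow, div_div_div_eq, div_add_div _ _ hd (by positivity), div_eq_div_iff he (by positivity)]
  ring

lemma sum_s {n : ℕ} (hn : 2 ≤ n) {ρ : ℝ}
    (hρ1 : -(1 / ((n : ℝ) - 1)) < ρ) (hρ2 : ρ < 1) {j : ℕ} (hj : j < n) :
    ∑ m ∈ range j, ((ρ - s ρ m) / Real.sqrt (1 - s ρ m)) ^ 2 = s ρ j := by
  induction j with
  | zero => simp [s]
  | succ j ih =>
    have hj' : j < n := Nat.lt_of_succ_lt hj
    have hdj : 0 < 1 + ((j : ℝ) - 1) * ρ := dden_pos hn hρ1 hρ2 hj'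
    have hdj1 : 0 < 1 + (j : ℝ) * ρ := by
      have := dden_pos hn hρ1 hρ2 hj
      push_cast at this
      linarith
    have h1 : (0:ℝ) < 1 - s ρ j := one_sub_s_pos hρ2 hdj hdj1
    rw [Finset.sum_range_succ, ih hj', div_pow, Real.sq_sqrt h1.le,
      s_rec hρ2 hdj hdj1]

end Stmt16Aux


open Matrix BigOperators

/-- **Cholesky value for the equicorrelation matrix.** For `n ≥ 2`,
`ρ ∈ (−1/(n−1), 1)` and the equicorrelation matrix `C`, the lower triangular
Cholesky factor `L` (positive diagonal, `L Lᵀ = C`) has diagonal entries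
`L_{kk} = √(1 − (k−1)ρ²/(1 + (k−2)ρ))` for `k = 1, …, n` (here `k : Fin n`
corresponds to the paper's `k − 1`), and
`(1/n)·tr(L) = (1/n)·Σ_{k=1}^n √(1 − (k−1)ρ²/(1 + (k−2)ρ))`. -/
theorem stmt_16 {n : ℕ} (hn : 2 ≤ n) (ρ : ℝ)
    (hρ1 : -(1 / ((n : ℝ) - 1)) < ρ) (hρ2 : ρ < 1)
    (C : Matrix (Fin n) (Fin n) ℝ)
    (hC : C = Matrix.of (fun i j : Fin n => if i = j then (1 : ℝ) else ρ))
    (L : Matrix (Fin n) (Fin n) ℝ)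
    (hLtri : ∀ i j : Fin n, i < j → L i j = 0)
    (hLdiag : ∀ i : Fin n, 0 < L i i)
    (hchol : L * Lᵀ = C) :
    (∀ k : Fin n,
      L k k = Real.sqrt (1 - ((k : ℕ) : ℝ) * ρ ^ 2 / (1 + (((k : ℕ) : ℝ) - 1) * ρ))) ∧
    (1 / (n : ℝ)) * L.trace
      = (1 / (n : ℝ)) * ∑ k : Fin n,
          Real.sqrt (1 - ((k : ℕ) : ℝ) * ρ ^ 2 / (1 + (((k : ℕ) : ℝ) - 1) * ρ)) := by
  classical
  set s := Stmt16Aux.s ρ with hs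
  -- the entry equations
  have hentry : ∀ k j : Fin n, (∑ m : Fin n, L k m * L j m)
      = if k = j then (1:ℝ) else ρ := by
    intro k j
    have := congrFun (congrFun hchol k) j
    rw [Matrix.mul_apply] at this
    simpa [Matrix.transpose_apply, hC] using this
  have key : ∀ j : ℕ, ∀ hj : j < n,
      (L ⟨j, hj⟩ ⟨j, hj⟩ = Real.sqrt (1 - s j)) ∧
      (∀ k : Fin n, j < (k : ℕ) →
        L k ⟨j, hj⟩ = (ρ - s j) / Real.sqrt (1 - s j)) := by
    intro j
    induction j using Nat.strong_induction_on with
    | _ j IH =>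
      intro hj
      -- sum decomposition for any row k with j ≤ k
      have hsum : ∀ k : Fin n, j ≤ (k : ℕ) →
          (∑ m : Fin n, L k m * L ⟨j, hj⟩ m)
            = s j + L k ⟨j, hj⟩ * L ⟨j, hj⟩ ⟨j, hj⟩ := by
        intro k hk
        set f : ℕ → ℝ := fun i =>
          if h : i < n then L k ⟨i, h⟩ * L ⟨j, hj⟩ ⟨i, h⟩ else 0 with hf
        have h0 : (∑ m : Fin n, L k m * L ⟨j, hj⟩ m) = ∑ i ∈ Finset.range n, f i := by
          rw [← Fin.sum_univ_eq_sum_range f n]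
          refine Finset.sum_congr rfl fun m _ => ?_
          simp [hf, m.isLt]
        have h1 : ∑ i ∈ Finset.range (j+1), f i + ∑ i ∈ Finset.Ico (j+1) n, f i
            = ∑ i ∈ Finset.range n, f i :=
          Finset.sum_range_add_sum_Ico f (by omega)
        have h2 : ∑ i ∈ Finset.Ico (j+1) n, f i = 0 := by
          refine Finset.sum_eq_zero fun i hi => ?_
          obtain ⟨hi1, hi2⟩ := Finset.mem_Ico.mp hi
          have : L ⟨j, hj⟩ ⟨i, hi2⟩ = 0 := hLtri _ _ (by simpa using by omega)
          simp [hf, hi2, this]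
        have h3 : ∑ i ∈ Finset.range j, f i
            = ∑ i ∈ Finset.range j, ((ρ - s i) / Real.sqrt (1 - s i)) ^ 2 := by
          refine Finset.sum_congr rfl fun i hi => ?_
          have hij : i < j := Finset.mem_range.mp hi
          have hin : i < n := by omega
          have hIH := IH i hij hin
          have e1 : L k ⟨i, hin⟩ = (ρ - s i) / Real.sqrt (1 - s i) :=
            hIH.2 k (by omega)
          have e2 : L ⟨j, hj⟩ ⟨i, hin⟩ = (ρ - s i) / Real.sqrt (1 - s i) :=
            hIH.2 ⟨j, hj⟩ (by simpa using hij)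
          simp [hf, hin, e1, e2, sq]
        have h4 : ∑ i ∈ Finset.range j, ((ρ - s i) / Real.sqrt (1 - s i)) ^ 2 = s j :=
          Stmt16Aux.sum_s hn hρ1 hρ2 hj
        have h5 : f j = L k ⟨j, hj⟩ * L ⟨j, hj⟩ ⟨j, hj⟩ := by simp [hf, hj]
        rw [h0, ← h1, h2, add_zero, Finset.sum_range_succ, h3, h4, h5]
      -- diagonal entry
      have hdiagval : L ⟨j, hj⟩ ⟨j, hj⟩ = Real.sqrt (1 - s j) := by
        have := hentry ⟨j, hj⟩ ⟨j, hj⟩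
        rw [hsum ⟨j, hj⟩ le_rfl, if_pos rfl] at this
        have hsq : L ⟨j, hj⟩ ⟨j, hj⟩ ^ 2 = 1 - s j := by nlinarith [this]
        rw [← hsq, Real.sqrt_sq (hLdiag ⟨j, hj⟩).le]
      refine ⟨hdiagval, fun k hk => ?_⟩
      have := hentry k ⟨j, hj⟩
      rw [hsum k (le_of_lt hk), if_neg (by
        intro h; rw [h] at hk; simp at hk)] at this
      have hLjj : 0 < L ⟨j, hj⟩ ⟨j, hj⟩ := hLdiag _
      field_simp [← hdiagval, ne_of_gt hLjj]
      rw [hdiagval] at this; linarith [this]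
  have hdiag : ∀ k : Fin n,
      L k k = Real.sqrt (1 - ((k : ℕ) : ℝ) * ρ ^ 2 / (1 + (((k : ℕ) : ℝ) - 1) * ρ)) := by
    intro k
    have := (key k.val k.isLt).1
    simpa [Fin.eta, hs, Stmt16Aux.s] using this
  refine ⟨hdiag, ?_⟩
  congr 1
  rw [Matrix.trace]
  exact Finset.sum_congr rfl fun k _ => hdiag k
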